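/- For all distinct strings X, Y ∈ Σ^r obtained as X = A_i·W_i·B_i and Y = A_j·W_j·B_j where the 3s strings A_1,...,A_s, B_1,...,B_s, W_1,...,W_s are over mutually distinct symbol sets except that each W_i contains a substring over Σ: if for every symbol a, a occurs in at most one of the strings {A_i}, {B_i} and in at most one W_i outside Σ, then any common subsequence of S_1 = A_1···A_s·W_1···W_s·B_1···B_s and S_2 = (A_s W_s B_s)···(A_1 W_1 B_1) that contains symbols from two distinct segments A_i and A_j (i ≠ j) of the same group must correspond to a crossing matching; hence every common subsequence uses symbols from at most one segment of each group 𝒜 = {A_i}, 𝒲 = {W_i}, ℬ = {B_i}. -/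

import Mathlib

/-- `c` occurs only before `c'` in `L`: there is a split of `L` with no `c` on the
right and no `c'` on the left. -/
def SepBefore {Γ : Type*} (c c' : Γ) (L : List Γ) : Prop :=
  ∃ l₁ l₂, L = l₁ ++ l₂ ∧ c ∉ l₂ ∧ c' ∉ l₁

lemma sepBefore_of_sublist {Γ : Type*} {c c' : Γ} {C L : List Γ}
    (h : C.Sublist L) (hL : SepBefore c c' L) : SepBefore c c' C := by
  obtain ⟨l₁, l₂, rfl, hc, hc'⟩ := hL
  obtain ⟨C₁, C₂, rfl, h1, h2⟩ := List.sublist_append_iff.mp h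
  exact ⟨C₁, C₂, rfl, fun hm => hc (h2.subset hm), fun hm => hc' (h1.subset hm)⟩

lemma sepBefore_asymm {Γ : Type*} {c c' : Γ} {C : List Γ}
    (hc : c ∈ C) (hc' : c' ∈ C) (h1 : SepBefore c c' C) (h2 : SepBefore c' c C) : False := by
  obtain ⟨l₁, l₂, he, hnc, hnc'⟩ := h1
  obtain ⟨m₁, m₂, he', hnc'₂, hnc₂⟩ := h2
  have hcl₁ : c ∈ l₁ := by
    rcases List.mem_append.mp (he ▸ hc) with h | h
    · exact h
    · exact absurd h hnc
  have hc'm₁ : c' ∈ m₁ := by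
    rcases List.mem_append.mp (he' ▸ hc') with h | h
    · exact h
    · exact absurd h hnc'₂
  have p₁ : l₁ <+: C := he ▸ ⟨l₂, rfl⟩
  have p₂ : m₁ <+: C := he' ▸ ⟨m₂, rfl⟩
  rcases List.prefix_or_prefix_of_prefix p₁ p₂ with h | h
  · exact hnc₂ (h.subset hcl₁)
  · exact hnc' (h.subset hc'm₁)

/-- In a join of segments, if all occurrences of `c` are in segment `i` and all
occurrences of `c'` are in segment `j`, with `i < j`, then `c` is separated before `c'`. -/
lemma sepBefore_join {Γ : Type*} {s : ℕ} (g : Fin s → List Γ) (c c' : Γ) (i j : Fin s)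
    (hij : (i : ℕ) < (j : ℕ))
    (hc : ∀ t, c ∈ g t → t = i) (hc' : ∀ t, c' ∈ g t → t = j) :
    SepBefore c c' (List.ofFn g).flatten := by
  refine ⟨((List.ofFn g).take ((i : ℕ) + 1)).flatten,
    ((List.ofFn g).drop ((i : ℕ) + 1)).flatten, ?_, ?_, ?_⟩
  · rw [← List.flatten_append, List.take_append_drop]
  · intro hm
    obtain ⟨l, hl, hcl⟩ := List.mem_flatten.mp hm
    obtain ⟨t, ht, hget⟩ := List.mem_iff_getElem.mp hl
    have ht' : (i : ℕ) + 1 + t < s := by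
      have hi := i.isLt
      simp [List.length_drop] at ht
      omega
    have hlg : l = g ⟨(i : ℕ) + 1 + t, ht'⟩ := by
      rw [← hget, List.getElem_drop]
      exact List.getElem_ofFn (f := g) (by simpa using ht')
    have h2 := hc _ (hlg ▸ hcl)
    have h3 := congrArg Fin.val h2
    simp only [] at h3
    omega
  · intro hm
    obtain ⟨l, hl, hcl⟩ := List.mem_flatten.mp hm
    obtain ⟨t, ht, hget⟩ := List.mem_iff_getElem.mp hl
    have htk : t < (i : ℕ) + 1 ∧ t < s := by
      have hi := i.isLt
      simp [List.length_take] at ht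
      omega
    have hlg : l = g ⟨t, htk.2⟩ := by
      rw [← hget, List.getElem_take]
      exact List.getElem_ofFn (f := g) (by simpa using htk.2)
    have h2 := hc' _ (hlg ▸ hcl)
    have h3 := congrArg Fin.val h2
    simp only [] at h3
    omega

lemma sepBefore_append_right {Γ : Type*} {c c' : Γ} {L R : List Γ}
    (h : SepBefore c c' L) (hc : c ∉ R) : SepBefore c c' (L ++ R) := by
  obtain ⟨l₁, l₂, rfl, h1, h2⟩ := h
  exact ⟨l₁, l₂ ++ R, by rw [List.append_assoc], by simp [h1, hc], h2⟩

lemma sepBefore_append_left {Γ : Type*} {c c' : Γ} {L R : List Γ}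
    (h : SepBefore c c' L) (hc' : c' ∉ R) : SepBefore c c' (R ++ L) := by
  obtain ⟨l₁, l₂, rfl, h1, h2⟩ := h
  exact ⟨R ++ l₁, l₂, by rw [List.append_assoc], h1, by simp [h2, hc']⟩

/-- every common subsequence of `S₁ = A₁⋯A_s·W₁⋯W_s·B₁⋯B_s` and
`S₂ = (A_s W_s B_s)⋯(A₁ W₁ B₁)` uses symbols from at most one segment of each of the
groups `𝒜`, `𝒲` (outside `Σ`), and `ℬ`. -/
theorem common_subsequence_one_segment_per_group {Γ : Type*} (s : ℕ) (Sigma : Set Γ)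
    (A W B : Fin s → List Γ)
    (hA : ∀ c : Γ, ∀ i : Fin s, c ∈ A i →
      (∀ j, c ∈ A j → j = i) ∧ (∀ j, c ∉ B j) ∧ (∀ j, c ∉ W j))
    (hB : ∀ c : Γ, ∀ i : Fin s, c ∈ B i →
      (∀ j, c ∈ B j → j = i) ∧ (∀ j, c ∉ A j) ∧ (∀ j, c ∉ W j))
    (hW : ∀ c : Γ, c ∉ Sigma → ∀ i j : Fin s, c ∈ W i → c ∈ W j → i = j)
    (C : List Γ)
    (h₁ : C.Sublist ((List.ofFn A).flatten ++ (List.ofFn W).flatten ++ (List.ofFn B).flatten))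
    (h₂ : C.Sublist ((List.ofFn fun i : Fin s => A i.rev ++ W i.rev ++ B i.rev).flatten)) :
    (∀ i j : Fin s, ∀ c ∈ C, ∀ c' ∈ C, c ∈ A i → c' ∈ A j → i = j) ∧
    (∀ i j : Fin s, ∀ c ∈ C, ∀ c' ∈ C, c ∈ B i → c' ∈ B j → i = j) ∧
    (∀ i j : Fin s, ∀ c ∈ C, ∀ c' ∈ C, c ∉ Sigma → c' ∉ Sigma →
      c ∈ W i → c' ∈ W j → i = j) := by
  set g : Fin s → List Γ := fun i : Fin s => A i.rev ++ W i.rev ++ B i.rev with hg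
  -- separation in S₂ for a symbol occurring only in group-segment i (any group)
  -- Main device: if c occurs (within g) only in segment i.rev and c' only in j.rev, with i<j,
  -- then c' comes before c in S₂.
  have S2sep : ∀ (c c' : Γ) (i j : Fin s), (i : ℕ) < (j : ℕ) →
      (∀ t : Fin s, c ∈ g t → t = i.rev) → (∀ t : Fin s, c' ∈ g t → t = j.rev) →
      SepBefore c' c (List.ofFn g).flatten := by
    intro c c' i j hij hc hc'
    refine sepBefore_join g c' c j.rev i.rev ?_ hc' hc
    rw [Fin.val_rev, Fin.val_rev]
    omega
  -- A case
  have hAcase : ∀ i j : Fin s, ∀ c ∈ C, ∀ c' ∈ C, c ∈ A i → c' ∈ A j →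
      (i : ℕ) < (j : ℕ) → False := by
    intro i j c hcC c' hc'C hcA hc'A hij
    obtain ⟨hAu, hBu, hWu⟩ := hA c i hcA
    obtain ⟨hAu', hBu', hWu'⟩ := hA c' j hc'A
    -- S₁: c before c'
    have s1 : SepBefore c c' ((List.ofFn A).flatten ++ (List.ofFn W).flatten ++ (List.ofFn B).flatten) := by
      refine sepBefore_append_right (sepBefore_append_right ?_ ?_) ?_
      · exact sepBefore_join A c c' i j hij hAu hAu'
      · simp only [List.mem_flatten]; rintro ⟨l, hl, hcl⟩
        obtain ⟨t, rfl⟩ := List.mem_ofFn.mp hl; exact hWu t hcl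
      · simp only [List.mem_flatten]; rintro ⟨l, hl, hcl⟩
        obtain ⟨t, rfl⟩ := List.mem_ofFn.mp hl; exact hBu t hcl
    -- S₂: c' before c
    have s2 : SepBefore c' c (List.ofFn g).flatten := by
      refine S2sep c c' i j hij ?_ ?_
      · intro t ht
        simp only [hg, List.mem_append] at ht
        rcases ht with (h | h) | h
        · have := hAu _ h; rw [← this, Fin.rev_rev]
        · exact absurd h (hWu _)
        · exact absurd h (hBu _)
      · intro t ht
        simp only [hg, List.mem_append] at ht
        rcases ht with (h | h) | h
        · have := hAu' _ h; rw [← this, Fin.rev_rev]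
        · exact absurd h (hWu' _)
        · exact absurd h (hBu' _)
    exact sepBefore_asymm hcC hc'C (sepBefore_of_sublist h₁ s1)
      (sepBefore_of_sublist h₂ s2)
  have hBcase : ∀ i j : Fin s, ∀ c ∈ C, ∀ c' ∈ C, c ∈ B i → c' ∈ B j →
      (i : ℕ) < (j : ℕ) → False := by
    intro i j c hcC c' hc'C hcB hc'B hij
    obtain ⟨hBu, hAu, hWu⟩ := hB c i hcB
    obtain ⟨hBu', hAu', hWu'⟩ := hB c' j hc'B
    have s1 : SepBefore c c' ((List.ofFn A).flatten ++ (List.ofFn W).flatten ++ (List.ofFn B).flatten) := by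
      refine sepBefore_append_left ?_ ?_
      · exact sepBefore_join B c c' i j hij hBu hBu'
      · simp only [List.mem_append, List.mem_flatten]; rintro (⟨l, hl, hcl⟩ | ⟨l, hl, hcl⟩)
        · obtain ⟨t, rfl⟩ := List.mem_ofFn.mp hl; exact hAu' t hcl
        · obtain ⟨t, rfl⟩ := List.mem_ofFn.mp hl; exact hWu' t hcl
    have s2 : SepBefore c' c (List.ofFn g).flatten := by
      refine S2sep c c' i j hij ?_ ?_
      · intro t ht
        simp only [hg, List.mem_append] at ht
        rcases ht with (h | h) | h
        · exact absurd h (hAu _)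
        · exact absurd h (hWu _)
        · have := hBu _ h; rw [← this, Fin.rev_rev]
      · intro t ht
        simp only [hg, List.mem_append] at ht
        rcases ht with (h | h) | h
        · exact absurd h (hAu' _)
        · exact absurd h (hWu' _)
        · have := hBu' _ h; rw [← this, Fin.rev_rev]
    exact sepBefore_asymm hcC hc'C (sepBefore_of_sublist h₁ s1)
      (sepBefore_of_sublist h₂ s2)
  have hWcase : ∀ i j : Fin s, ∀ c ∈ C, ∀ c' ∈ C, c ∉ Sigma → c' ∉ Sigma →
      c ∈ W i → c' ∈ W j → (i : ℕ) < (j : ℕ) → False := by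
    intro i j c hcC c' hc'C hcS hc'S hcW hc'W hij
    have hWu : ∀ t, c ∈ W t → t = i := fun t ht => hW c hcS t i ht hcW
    have hWu' : ∀ t, c' ∈ W t → t = j := fun t ht => hW c' hc'S t j ht hc'W
    have hAu : ∀ t, c ∉ A t := fun t ht => (hA c t ht).2.2 i hcW
    have hAu' : ∀ t, c' ∉ A t := fun t ht => (hA c' t ht).2.2 j hc'W
    have hBu : ∀ t, c ∉ B t := fun t ht => (hB c t ht).2.2 i hcW
    have hBu' : ∀ t, c' ∉ B t := fun t ht => (hB c' t ht).2.2 j hc'W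
    have s1 : SepBefore c c' ((List.ofFn A).flatten ++ (List.ofFn W).flatten ++ (List.ofFn B).flatten) := by
      refine sepBefore_append_right (sepBefore_append_left ?_ ?_) ?_
      · exact sepBefore_join W c c' i j hij hWu hWu'
      · simp only [List.mem_flatten]; rintro ⟨l, hl, hcl⟩
        obtain ⟨t, rfl⟩ := List.mem_ofFn.mp hl; exact hAu' t hcl
      · simp only [List.mem_flatten]; rintro ⟨l, hl, hcl⟩
        obtain ⟨t, rfl⟩ := List.mem_ofFn.mp hl; exact hBu t hcl
    have s2 : SepBefore c' c (List.ofFn g).flatten := by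
      refine S2sep c c' i j hij ?_ ?_
      · intro t ht
        simp only [hg, List.mem_append] at ht
        rcases ht with (h | h) | h
        · exact absurd h (hAu _)
        · have := hWu _ h; rw [← this, Fin.rev_rev]
        · exact absurd h (hBu _)
      · intro t ht
        simp only [hg, List.mem_append] at ht
        rcases ht with (h | h) | h
        · exact absurd h (hAu' _)
        · have := hWu' _ h; rw [← this, Fin.rev_rev]
        · exact absurd h (hBu' _)
    exact sepBefore_asymm hcC hc'C (sepBefore_of_sublist h₁ s1)
      (sepBefore_of_sublist h₂ s2)
  refine ⟨?_, ?_, ?_⟩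
  · intro i j c hc c' hc' hci hcj
    rcases lt_trichotomy (i : ℕ) (j : ℕ) with h | h | h
    · exact absurd (hAcase i j c hc c' hc' hci hcj h) (not_false)
    · exact Fin.ext h
    · exact absurd (hAcase j i c' hc' c hc hcj hci h) (not_false)
  · intro i j c hc c' hc' hci hcj
    rcases lt_trichotomy (i : ℕ) (j : ℕ) with h | h | h
    · exact absurd (hBcase i j c hc c' hc' hci hcj h) (not_false)
    · exact Fin.ext h
    · exact absurd (hBcase j i c' hc' c hc hcj hci h) (not_false)
  · intro i j c hc c' hc' hS hS' hci hcj
    rcases lt_trichotomy (i : ℕ) (j : ℕ) with h | h | h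
    · exact absurd (hWcase i j c hc c' hc' hS hS' hci hcj h) (not_false)
    · exact Fin.ext h
    · exact absurd (hWcase j i c' hc' c hc hS' hS hcj hci h) (not_false)
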